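/- Let M₁, M₂ be 2×2 traceless Hermitian matrices, written as M_k = [[a_k, b_k e^{iφ_k}], [b_k e^{-iφ_k}, -a_k]] with a_k, b_k, φ_k real and a_k ≠ 0. Then there exist real numbers α, β such that the unit vector v = (cos β, sin β e^{-iα}) satisfies ⟨v|M₁|v⟩ = ⟨v|M₂|v⟩ = 0; equivalently, there exist α, β with cot(2β) = -(b_k/a_k)·cos(α - φ_k) for k = 1, 2. -/

import Mathlib

open Matrix

/-- There is always a root of `A cos α + B sin α = 0`. -/
lemma exists_cos_sin_root (A B : ℝ) : ∃ α : ℝ, A * Real.cos α + B * Real.sin α = 0 := by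
  by_cases hB : B = 0
  · exact ⟨Real.pi / 2, by simp [Real.cos_pi_div_two, Real.sin_pi_div_two, hB]⟩
  · refine ⟨Real.arctan (-A / B), ?_⟩
    rw [Real.sin_arctan, Real.cos_arctan]
    have h : Real.sqrt (1 + (-A / B) ^ 2) ≠ 0 := by
      positivity
    field_simp
    ring

/-- For two 2×2 traceless Hermitian matrices `M_k = [[a_k, b_k e^{iφ_k}],
[b_k e^{-iφ_k}, -a_k]]` with `a_k ≠ 0`, there exist reals `α, β` such that the
unit vector `v = (cos β, sin β e^{-iα})` satisfies `⟨v|M₁|v⟩ = ⟨v|M₂|v⟩ = 0`. -/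
theorem two_by_two_zero_diag (a b φ : Fin 2 → ℝ) (ha : ∀ k, a k ≠ 0)
    (M : Fin 2 → Matrix (Fin 2) (Fin 2) ℂ)
    (hM : ∀ k, M k =
      !![(a k : ℂ), (b k : ℂ) * Complex.exp (Complex.I * (φ k : ℂ));
         (b k : ℂ) * Complex.exp (-Complex.I * (φ k : ℂ)), -(a k : ℂ)]) :
    ∃ α β : ℝ, ∀ k,
      star ![(Real.cos β : ℂ), (Real.sin β : ℂ) * Complex.exp (-Complex.I * (α : ℂ))] ⬝ᵥ
        (M k).mulVec
          ![(Real.cos β : ℂ), (Real.sin β : ℂ) * Complex.exp (-Complex.I * (α : ℂ))] = 0 := by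
  -- choose α making the two "effective slopes" equal
  obtain ⟨α, hα⟩ := exists_cos_sin_root
    (b 0 / a 0 * Real.cos (φ 0) - b 1 / a 1 * Real.cos (φ 1))
    (b 0 / a 0 * Real.sin (φ 0) - b 1 / a 1 * Real.sin (φ 1))
  set c : ℝ := b 0 / a 0 * (Real.cos α * Real.cos (φ 0) + Real.sin α * Real.sin (φ 0)) with hc
  -- choose θ with cos θ + c sin θ = 0, and set β = θ/2
  obtain ⟨θ, hθ⟩ := exists_cos_sin_root 1 c
  refine ⟨α, θ / 2, ?_⟩
  -- the common effective slope
  have hk : ∀ k, b k * (Real.cos α * Real.cos (φ k) + Real.sin α * Real.sin (φ k)) = a k * c := by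
    intro k
    fin_cases k
    · have h0 := ha 0
      change b 0 * (Real.cos α * Real.cos (φ 0) + Real.sin α * Real.sin (φ 0)) = a 0 * c
      rw [hc]
      field_simp
    · have h0 := ha 0
      have h1 := ha 1
      change b 1 * (Real.cos α * Real.cos (φ 1) + Real.sin α * Real.sin (φ 1)) = a 1 * c
      rw [hc]
      field_simp at hα ⊢
      nlinarith [hα]
  -- the key real identity for each k
  have H : ∀ k, a k * (Real.cos (θ / 2) ^ 2 - Real.sin (θ / 2) ^ 2)
      + b k * (Real.cos α * Real.cos (φ k) + Real.sin α * Real.sin (φ k))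
        * (2 * Real.sin (θ / 2) * Real.cos (θ / 2)) = 0 := by
    intro k
    have hcos : Real.cos (θ / 2) ^ 2 - Real.sin (θ / 2) ^ 2 = Real.cos θ := by
      rw [← Real.cos_two_mul']; ring_nf
    have hsin : 2 * Real.sin (θ / 2) * Real.cos (θ / 2) = Real.sin θ := by
      rw [← Real.sin_two_mul]; ring_nf
    rw [hcos, hsin, hk k]
    linear_combination a k * hθ
  intro k
  -- now the complex computation
  simp only [hM, dotProduct, Matrix.mulVec, Fin.sum_univ_two, Pi.star_apply,
    Matrix.cons_val_zero, Matrix.cons_val_one, Matrix.head_cons, Matrix.cons_val',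
    Matrix.cons_val_fin_one, Matrix.empty_val', Matrix.of_apply, Matrix.head_fin_const,
    star_mul', Complex.star_def, ← Complex.exp_conj, _root_.map_mul, _root_.map_neg,
    Complex.conj_I, Complex.conj_ofReal]
  have e1 : ∀ x : ℝ, Complex.exp (Complex.I * (x:ℂ)) = Real.cos x + Real.sin x * Complex.I := by
    intro x
    rw [mul_comm, Complex.exp_mul_I, Complex.ofReal_cos, Complex.ofReal_sin]
  have e2 : ∀ x : ℝ, Complex.exp (-Complex.I * (x:ℂ)) = Real.cos x - Real.sin x * Complex.I := by
    intro x
    rw [neg_mul, mul_comm, ← neg_mul, Complex.exp_mul_I, Complex.cos_neg, Complex.sin_neg,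
      Complex.ofReal_cos, Complex.ofReal_sin]
    ring
  rw [show (- -Complex.I * (α:ℂ)) = Complex.I * (α:ℂ) by ring]
  simp only [e1, e2]
  have hs := Real.sin_sq_add_cos_sq α
  simp only [Complex.ext_iff, Complex.add_re, Complex.add_im, Complex.mul_re, Complex.mul_im,
    Complex.sub_re, Complex.sub_im, Complex.ofReal_re, Complex.ofReal_im, Complex.I_re,
    Complex.I_im, Complex.neg_re, Complex.neg_im, Complex.zero_re, Complex.zero_im]
  exact ⟨by linear_combination H k - a k * Real.sin (θ / 2) ^ 2 * hs, by ring⟩
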